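/- Fix even k ≥ 2 and positive integers m, n with mn ≤ (k/(4πe))². Then Σ_{c ≥ 1} c^{−1/2} τ(c) (m,n,c)^{1/2} · (1/(k−1)!) · (2π√(mn)/c)^{k−1} ≪ 2^{−k}·(mn)^{1/4}·log(2mn)·∏_{p | (m,n)} (1 + 3/√p), where τ is the divisor function and (m,n,c) the gcd. -/

import Mathlib

open Real
open scoped Classical

/-- there is an absolute constant `C` such that for all even `k ≥ 2`
and positive integers `m, n` with `mn ≤ (k/(4πe))²`,
`Σ_{c ≥ 1} c^{-1/2} τ(c) (m,n,c)^{1/2} (1/(k-1)!) (2π√(mn)/c)^{k-1}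
  ≤ C · 2^{-k} (mn)^{1/4} log(2mn) ∏_{p|(m,n)} (1+3/√p)`. -/
theorem stmt16 :
    ∃ C : ℝ, 0 < C ∧ ∀ k m n : ℕ, 2 ≤ k → Even k → 0 < m → 0 < n →
      ((m * n : ℕ) : ℝ) ≤ ((k : ℝ) / (4 * Real.pi * Real.exp 1)) ^ 2 →
      (∑' c : ℕ, (if 1 ≤ c then
          ((c : ℝ)) ^ (-(1 : ℝ) / 2) * (c.divisors.card : ℝ) *
            Real.sqrt (Nat.gcd (Nat.gcd m n) c) *
            (1 / (Nat.factorial (k - 1))) *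
            (2 * Real.pi * Real.sqrt ((m * n : ℕ)) / c) ^ (k - 1)
        else 0))
        ≤ C * (2 : ℝ) ^ (-(k : ℝ)) * ((m * n : ℕ) : ℝ) ^ ((1 : ℝ) / 4) *
            Real.log (2 * ((m * n : ℕ) : ℝ)) *
            ∏ p ∈ (Nat.gcd m n).primeFactors, (1 + 3 / Real.sqrt p) := by
  have hlog2 : 0 < Real.log 2 := Real.log_pos one_lt_two
  set A : ℝ := ∑' c : ℕ, 1 / (c : ℝ) ^ 2 with hAdef
  have hAsum : Summable (fun c : ℕ => 1 / (c : ℝ) ^ 2) :=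
    Real.summable_one_div_nat_pow.mpr one_lt_two
  have hA0 : 0 ≤ A := tsum_nonneg fun c => by positivity
  set C : ℝ := 2 * Real.exp 1 * A / Real.log 2 + 1 with hCdef
  have hC0 : 0 < C := by
    have : 0 ≤ 2 * Real.exp 1 * A / Real.log 2 :=
      div_nonneg (by positivity) hlog2.le
    rw [hCdef]; linarith
  refine ⟨C, hC0, ?_⟩
  intro k m n hk2 _hkeven hm hn hmn
  obtain ⟨j, rfl⟩ : ∃ j, k = j + 1 := ⟨k - 1, by omega⟩
  simp only [Nat.add_sub_cancel]
  set g : ℕ := Nat.gcd m n with hgdef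
  have hg : 0 < g := Nat.gcd_pos_of_pos_left n hm
  set X : ℝ := 2 * Real.pi * Real.sqrt ((m * n : ℕ) : ℝ) with hXdef
  have hX0 : 0 ≤ X := by positivity
  have hmn1 : (1 : ℝ) ≤ ((m * n : ℕ) : ℝ) := by
    exact_mod_cast Nat.one_le_iff_ne_zero.mpr (Nat.mul_pos hm hn).ne'
  have hsqrt : Real.sqrt ((m * n : ℕ) : ℝ) ≤ ((j + 1 : ℕ) : ℝ) / (4 * Real.pi * Real.exp 1) := by
    have h := Real.sqrt_le_sqrt hmn
    rwa [Real.sqrt_sq (by positivity)] at h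
  have hsq1 : (1 : ℝ) ≤ Real.sqrt ((m * n : ℕ) : ℝ) := by
    rw [show (1:ℝ) = Real.sqrt 1 by simp]
    exact Real.sqrt_le_sqrt hmn1
  have hkbig : 4 * Real.pi * Real.exp 1 ≤ ((j + 1 : ℕ) : ℝ) := by
    have h := hsq1.trans hsqrt
    rw [le_div_iff₀ (by positivity)] at h
    linarith
  have hj3 : 3 ≤ j := by
    have hpi : (3 : ℝ) < Real.pi := Real.pi_gt_three
    have he : (2 : ℝ) < Real.exp 1 := by
      have := Real.exp_one_gt_d9; linarith
    have : (4 : ℝ) ≤ ((j + 1 : ℕ) : ℝ) := by nlinarith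
    have : (4 : ℕ) ≤ j + 1 := by exact_mod_cast this
    omega
  have hXk : 2 * Real.exp 1 * X ≤ ((j + 1 : ℕ) : ℝ) := by
    have h2 : (4 * Real.pi * Real.exp 1) * Real.sqrt ((m * n : ℕ) : ℝ) ≤
        (4 * Real.pi * Real.exp 1) * (((j + 1 : ℕ) : ℝ) / (4 * Real.pi * Real.exp 1)) :=
      mul_le_mul_of_nonneg_left hsqrt (by positivity)
    rw [mul_div_cancel₀ _ (by positivity)] at h2
    calc 2 * Real.exp 1 * X = (4 * Real.pi * Real.exp 1) * Real.sqrt ((m * n : ℕ) : ℝ) := by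
          rw [hXdef]; ring
      _ ≤ _ := h2
  -- the key factorial bound
  have hstir : X ^ j / (Nat.factorial j : ℝ) ≤
      2 * Real.exp 1 * (2 : ℝ) ^ (-((j + 1 : ℕ) : ℝ)) := by
    have h1 := Real.pow_div_factorial_le_exp (x := 2 * Real.exp 1 * X) (by positivity) j
    have h2 : Real.exp (2 * Real.exp 1 * X) ≤ Real.exp 1 ^ (j + 1) := by
      rw [show Real.exp 1 ^ (j+1) = Real.exp ((j+1 : ℕ) * 1) from (Real.exp_nat_mul 1 (j+1)).symm]
      rw [mul_one]
      exact Real.exp_le_exp.mpr hXk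
    have h3 : (2 * Real.exp 1) ^ j * X ^ j / (Nat.factorial j : ℝ) ≤ Real.exp 1 ^ (j + 1) := by
      rw [← mul_pow]; exact h1.trans h2
    have hfacpos : (0 : ℝ) < (Nat.factorial j : ℝ) := by
      exact_mod_cast Nat.factorial_pos j
    have h4 : X ^ j / (Nat.factorial j : ℝ) ≤
        Real.exp 1 ^ (j + 1) / (2 * Real.exp 1) ^ j := by
      rw [le_div_iff₀ (by positivity)]
      calc X ^ j / (Nat.factorial j : ℝ) * (2 * Real.exp 1) ^ j
          = (2 * Real.exp 1) ^ j * X ^ j / (Nat.factorial j : ℝ) := by ring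
        _ ≤ _ := h3
    refine h4.trans_eq ?_
    rw [show (-((j + 1 : ℕ) : ℝ)) = -(((j+1 : ℕ) : ℝ)) by ring,
      Real.rpow_neg (by norm_num : (0:ℝ) ≤ 2), Real.rpow_natCast]
    have h2e : ((2 : ℝ) ^ (j + 1)) ≠ 0 := by positivity
    field_simp
    ring
  set E : ℝ := 2 * Real.exp 1 * (2 : ℝ) ^ (-((j + 1 : ℕ) : ℝ)) with hEdef
  have hE0 : 0 ≤ E := by positivity
  set B : ℝ := E * Real.sqrt (g : ℝ) with hBdef
  have hB0 : 0 ≤ B := by positivity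
  set f : ℕ → ℝ := fun c => if 1 ≤ c then
      ((c : ℝ)) ^ (-(1 : ℝ) / 2) * (c.divisors.card : ℝ) *
        Real.sqrt (Nat.gcd g c) *
        (1 / (Nat.factorial j : ℝ)) *
        (X / c) ^ j
    else 0 with hfdef
  have hf0 : ∀ c, 0 ≤ f c := by
    intro c
    rw [hfdef]
    dsimp only
    split
    · positivity
    · exact le_rfl
  have hterm : ∀ c : ℕ, f c ≤ B * (1 / (c : ℝ) ^ 2) := by
    intro c
    rcases Nat.eq_zero_or_pos c with rfl | hc
    · simp [hfdef]
    · have hc1 : (1 : ℝ) ≤ (c : ℝ) := by exact_mod_cast hc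
      have hcpos : (0 : ℝ) < (c : ℝ) := by linarith
      rw [hfdef]
      dsimp only
      rw [if_pos (show 1 ≤ c from hc)]
      have hτ : ((c.divisors.card : ℕ) : ℝ) ≤ (c : ℝ) := by
        have hsub : c.divisors ⊆ Finset.Ico 1 (c + 1) := Finset.filter_subset _ _
        have := Finset.card_le_card hsub
        rw [Nat.card_Ico] at this
        exact_mod_cast this.trans (by omega)
      have hgc : Real.sqrt ((Nat.gcd g c : ℕ) : ℝ) ≤ Real.sqrt (g : ℝ) :=
        Real.sqrt_le_sqrt (by exact_mod_cast Nat.le_of_dvd hg (Nat.gcd_dvd_left g c))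
      have hrpow1 : ((c : ℝ)) ^ (-(1 : ℝ) / 2) ≤ 1 :=
        Real.rpow_le_one_of_one_le_of_nonpos hc1 (by norm_num)
      have step1 : ((c : ℝ)) ^ (-(1 : ℝ) / 2) * (c.divisors.card : ℝ) *
          Real.sqrt (Nat.gcd g c) * (1 / (Nat.factorial j : ℝ)) * (X / c) ^ j ≤
          1 * (c : ℝ) * Real.sqrt (g : ℝ) * (1 / (Nat.factorial j : ℝ)) * (X / c) ^ j := by
        gcongr
      have step2 : 1 * (c : ℝ) * Real.sqrt (g : ℝ) * (1 / (Nat.factorial j : ℝ)) * (X / c) ^ j =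
          (c : ℝ) * Real.sqrt (g : ℝ) * (X ^ j / (Nat.factorial j : ℝ)) * (1 / (c : ℝ) ^ j) := by
        rw [div_pow]; ring
      have step3 : (c : ℝ) * Real.sqrt (g : ℝ) * (X ^ j / (Nat.factorial j : ℝ)) *
          (1 / (c : ℝ) ^ j) ≤ (c : ℝ) * Real.sqrt (g : ℝ) * E * (1 / (c : ℝ) ^ 3) := by
        gcongr
        all_goals first | exact hstir | exact hc1 | exact hj3
      have step4 : (c : ℝ) * Real.sqrt (g : ℝ) * E * (1 / (c : ℝ) ^ 3) =
          B * (1 / (c : ℝ) ^ 2) := by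
        rw [hBdef]
        field_simp
      calc _ ≤ _ := step1
        _ = _ := step2
        _ ≤ _ := step3
        _ = _ := step4
  have hmaj : Summable (fun c : ℕ => B * (1 / (c : ℝ) ^ 2)) := hAsum.mul_left B
  have hfsum : Summable f := Summable.of_nonneg_of_le hf0 hterm hmaj
  have htsum : (∑' c, f c) ≤ B * A := by
    calc (∑' c, f c) ≤ ∑' c : ℕ, B * (1 / (c : ℝ) ^ 2) := Summable.tsum_le_tsum hterm hfsum hmaj
      _ = B * A := by rw [hAdef, tsum_mul_left]
  -- compare B * A with the RHS
  have hgle : Real.sqrt (g : ℝ) ≤ ((m * n : ℕ) : ℝ) ^ ((1 : ℝ) / 4) := by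
    have hgsq : ((g : ℝ)) ^ 2 ≤ ((m * n : ℕ) : ℝ) := by
      have h1 : g * g ≤ m * n :=
        Nat.mul_le_mul (Nat.le_of_dvd hm (Nat.gcd_dvd_left m n))
          (Nat.le_of_dvd hn (Nat.gcd_dvd_right m n))
      have : ((g * g : ℕ) : ℝ) ≤ ((m * n : ℕ) : ℝ) := by exact_mod_cast h1
      calc ((g : ℝ)) ^ 2 = ((g * g : ℕ) : ℝ) := by push_cast; ring
        _ ≤ _ := this
    have h2 : (g : ℝ) ≤ Real.sqrt ((m * n : ℕ) : ℝ) :=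
      (Real.le_sqrt (by positivity) (by positivity)).mpr hgsq
    have h3 : Real.sqrt (g : ℝ) ≤ Real.sqrt (Real.sqrt ((m * n : ℕ) : ℝ)) :=
      Real.sqrt_le_sqrt h2
    refine h3.trans_eq ?_
    rw [Real.sqrt_eq_rpow, Real.sqrt_eq_rpow, ← Real.rpow_mul (by positivity)]
    norm_num
  have hL : Real.log 2 ≤ Real.log (2 * ((m * n : ℕ) : ℝ)) :=
    Real.log_le_log (by norm_num) (by linarith)
  have hP : (1 : ℝ) ≤ ∏ p ∈ g.primeFactors, (1 + 3 / Real.sqrt p) := by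
    calc (1 : ℝ) = ∏ _p ∈ g.primeFactors, (1 : ℝ) := by simp
      _ ≤ ∏ p ∈ g.primeFactors, (1 + 3 / Real.sqrt p) := by
          refine Finset.prod_le_prod (fun p _ => zero_le_one) fun p _ => ?_
          have : (0 : ℝ) ≤ 3 / Real.sqrt p := by positivity
          linarith
  have hCkey : 2 * Real.exp 1 * A ≤ C * Real.log 2 := by
    have hC2 : C * Real.log 2 = 2 * Real.exp 1 * A + Real.log 2 := by
      rw [hCdef]
      field_simp
    rw [hC2]; linarith
  have hQ0 : (0 : ℝ) ≤ ((m * n : ℕ) : ℝ) ^ ((1 : ℝ) / 4) := by positivity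
  have h2k0 : (0 : ℝ) ≤ (2 : ℝ) ^ (-((j + 1 : ℕ) : ℝ)) := by positivity
  calc (∑' c, f c) ≤ B * A := htsum
    _ = (2 * Real.exp 1 * A) * ((2 : ℝ) ^ (-((j + 1 : ℕ) : ℝ)) * Real.sqrt (g : ℝ)) := by
        rw [hBdef, hEdef]; ring
    _ ≤ (2 * Real.exp 1 * A) * ((2 : ℝ) ^ (-((j + 1 : ℕ) : ℝ)) *
          ((m * n : ℕ) : ℝ) ^ ((1 : ℝ) / 4)) := by
        gcongr
    _ ≤ (C * Real.log 2) * ((2 : ℝ) ^ (-((j + 1 : ℕ) : ℝ)) *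
          ((m * n : ℕ) : ℝ) ^ ((1 : ℝ) / 4)) := by
        exact mul_le_mul_of_nonneg_right hCkey (by positivity)
    _ = C * (2 : ℝ) ^ (-((j + 1 : ℕ) : ℝ)) * ((m * n : ℕ) : ℝ) ^ ((1 : ℝ) / 4) *
          Real.log 2 * 1 := by ring
    _ ≤ C * (2 : ℝ) ^ (-((j + 1 : ℕ) : ℝ)) * ((m * n : ℕ) : ℝ) ^ ((1 : ℝ) / 4) *
          Real.log (2 * ((m * n : ℕ) : ℝ)) * 1 := by
        gcongr
    _ ≤ C * (2 : ℝ) ^ (-((j + 1 : ℕ) : ℝ)) * ((m * n : ℕ) : ℝ) ^ ((1 : ℝ) / 4) *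
          Real.log (2 * ((m * n : ℕ) : ℝ)) *
          ∏ p ∈ g.primeFactors, (1 + 3 / Real.sqrt p) := by
        refine mul_le_mul_of_nonneg_left hP ?_
        exact mul_nonneg (by positivity) (hlog2.trans_le hL).le
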